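/- Let T be a subring of R = ∏_{λ∈Λ} D_λ such that there exists c ∈ T where c_λ is a nonzero nonunit of D_λ for every λ ∈ Λ, and let F be an ultrafilter on Λ. Then (0)_F^T = {x ∈ T | z(x) ∈ F} is an ideal of T that is not a maximal ideal of T. -/

import Mathlib

/-!
Common setup: `Λ` is an index set, `D λ` a family of commutative rings,
`R = ∏ λ, D λ` the product ring, and
`B = ∏ λ, P(max (D λ))` the product Boolean algebra of the power sets of the
sets of maximal ideals, realized as the Pi type `∀ l, Set (MaximalSpectrum (D l))`
with its componentwise Boolean algebra structure (meet = componentwise ∩,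
join = componentwise ∪, `⊥ = (∅)_λ`, complement componentwise, order = componentwise ⊆).
-/

variable {Λ : Type*} {D : Λ → Type*}

/-- `S(a) = (V(a_λ))_λ ∈ B`, where `V(x)` is the set of maximal ideals containing `x`. -/
def SFam [∀ l, CommRing (D l)] (a : ∀ l, D l) : ∀ l, Set (MaximalSpectrum (D l)) :=
  fun l => {P | a l ∈ P.asIdeal}

/-- `z(x) = {λ | x_λ = 0}`. -/
def ZFam [∀ l, CommRing (D l)] (x : ∀ l, D l) : Set Λ := {l | x l = 0}

/-- A filter in a Boolean algebra: a nonempty subset not containing `⊥`, closed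
under meets, and upward closed. -/
def IsBFilter {B : Type*} [BooleanAlgebra B] (U : Set B) : Prop :=
  U.Nonempty ∧ ⊥ ∉ U ∧ (∀ X ∈ U, ∀ Y ∈ U, X ⊓ Y ∈ U) ∧ (∀ Y ∈ U, ∀ Z, Y ≤ Z → Z ∈ U)

/-- An ultrafilter in a Boolean algebra: a filter containing `Y` or `Yᶜ` for every `Y`. -/
def IsBUltrafilter {B : Type*} [BooleanAlgebra B] (U : Set B) : Prop :=
  IsBFilter U ∧ ∀ Y, Y ∈ U ∨ Yᶜ ∈ U

/-- Property (+): for all `r` and all nonzero `a` there is `d` lying in every maximal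
ideal containing `a` but not `r`, and in no maximal ideal containing `r`. -/
def PropertyPlus (A : Type*) [CommRing A] : Prop :=
  ∀ r a : A, a ≠ 0 → ∃ d : A,
    (∀ M : Ideal A, M.IsMaximal → a ∈ M → r ∉ M → d ∈ M) ∧
    (∀ M : Ideal A, M.IsMaximal → r ∈ M → d ∉ M)

/-- Property (++): for every `r` there is `d` with `D(r) = V(d)`, i.e. the maximal
ideals containing `d` are exactly those not containing `r`. -/
def PropertyPlusPlus (A : Type*) [CommRing A] : Prop :=
  ∀ r : A, ∃ d : A, ∀ P : MaximalSpectrum A, d ∈ P.asIdeal ↔ r ∉ P.asIdeal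

/-- If `T ⊆ R` is a subring containing an element `c` all of whose components are
nonzero nonunits, and `F` is an ultrafilter on `Λ`, then the set of `x ∈ T` with
`z x ∈ F` is a non-maximal ideal of `T`. -/
theorem stmt_5 [∀ l, CommRing (D l)] [∀ l, Nontrivial (D l)]
    (T : Subring (∀ l, D l)) (c : ∀ l, D l) (hcT : c ∈ T)
    (hc : ∀ l, c l ≠ 0 ∧ ¬IsUnit (c l)) (F : Ultrafilter Λ) :
    ∃ I : Ideal T, (∀ x : T, x ∈ I ↔ ZFam (x : ∀ l, D l) ∈ F) ∧ ¬I.IsMaximal := by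
  refine ⟨{
    carrier := {x : T | ZFam (x : ∀ l, D l) ∈ F}
    add_mem' := ?_
    zero_mem' := ?_
    smul_mem' := ?_ }, fun x => Iff.rfl, ?_⟩
  · intro a b ha hb
    refine Filter.mem_of_superset (Filter.inter_mem ha hb) ?_
    rintro l ⟨h1, h2⟩
    simp only [ZFam, Set.mem_setOf_eq] at *
    show ((a : ∀ l, D l) + b) l = 0
    simp [h1, h2]
  · have : ZFam ((0 : T) : ∀ l, D l) = Set.univ := by
      ext l; simp [ZFam]
    simp only [Set.mem_setOf_eq, this]
    exact Filter.univ_mem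
  · intro r a ha
    refine Filter.mem_of_superset ha ?_
    intro l hl
    simp only [ZFam, Set.mem_setOf_eq] at *
    show ((r : ∀ l, D l) * a) l = 0
    simp [hl]
  · intro hmax
    have hcI : (⟨c, hcT⟩ : T) ∉ ({x : T | ZFam (x : ∀ l, D l) ∈ F} : Set T) := by
      intro h
      have : ZFam c = (∅ : Set Λ) := by
        ext l; simp [ZFam, (hc l).1]
      rw [Set.mem_setOf_eq, this] at h
      exact F.empty_notMem h
    obtain ⟨y, i, hi, heq⟩ := hmax.exists_inv hcI
    have hiz : ZFam ((i : ∀ l, D l)) ∈ F := hi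
    obtain ⟨l, hl⟩ := F.nonempty_of_mem hiz
    have : (y : ∀ l, D l) l * c l + (i : ∀ l, D l) l = 1 := by
      have := congrArg (fun t : T => (t : ∀ l, D l) l) heq
      simpa using this
    rw [hl] at this
    exact (hc l).2 (IsUnit.of_mul_eq_one (a := c l) ((y : ∀ l, D l) l) (by rw [mul_comm]; simpa using this))
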